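/- arXiv:1501.05506 — 2 statements merged into one kernel-verified Lean document; each statement's English description precedes it below -/
import Mathlib

section
/- Let μ be a measure on a measurable space 𝒳, let n ∈ ℕ, and let φ₁, …, φₙ and ψ₁, …, ψₙ be functions on 𝒳 such that all the integrals below converge. Then ∫_{𝒳ⁿ} det[φ_k(x_j)]_{j,k=1}^n · det[ψ_k(x_j)]_{j,k=1}^n dμ(x₁)⋯dμ(xₙ) = n! · det[ ∫_𝒳 φ_j(x) ψ_k(x) dμ(x) ]_{j,k=1}^n. -/
open MeasureTheory ProbabilityTheory Matrix
open scoped ComplexOrder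

noncomputable section

/-- The Vandermonde product `Δₙ(x) = ∏_{j<k} (x_k - x_j)`. -/
def vdm {n : ℕ} (x : Fin n → ℝ) : ℝ :=
  ∏ p ∈ Finset.univ.filter (fun p : Fin n × Fin n => p.1 < p.2), (x p.2 - x p.1)

/-- `x` enumerates the eigenvalues (with multiplicity) of the Hermitian matrix `A`. -/
def IsEigenvalueEnum {n : ℕ} (A : Matrix (Fin n) (Fin n) ℂ) (x : Fin n → ℝ) : Prop :=
  ∃ (hA : A.IsHermitian) (σ : Equiv.Perm (Fin n)), x = hA.eigenvalues ∘ σ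

/-- `x` enumerates the nonzero eigenvalues (with multiplicity) of the Hermitian `m × m`
matrix `A`, the remaining `m - n` eigenvalues being zero. -/
def IsNonzeroEigenvalueEnum {m n : ℕ} (A : Matrix (Fin m) (Fin m) ℂ) (x : Fin n → ℝ) : Prop :=
  (∀ i, x i ≠ 0) ∧ ∃ (hA : A.IsHermitian) (e : Fin m ≃ (Fin n ⊕ Fin (m - n))),
    ∀ i, hA.eigenvalues i = Sum.elim x (fun _ => (0 : ℝ)) (e i)

/-- `G` is a complex Ginibre random matrix: the real and imaginary parts of all entries are
mutually independent real Gaussians of mean `0` and variance `1/2`. -/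
def IsGinibre {Ω : Type*} [MeasureSpace Ω] {p q : ℕ} (G : Ω → Fin p → Fin q → ℂ) : Prop :=
  Measurable G ∧
  iIndepFun
    (fun idx : (Fin p × Fin q) × Bool => fun ω =>
      if idx.2 then (G ω idx.1.1 idx.1.2).re else (G ω idx.1.1 idx.1.2).im) volume ∧
  ∀ idx : (Fin p × Fin q) × Bool,
    Measure.map (fun ω => if idx.2 then (G ω idx.1.1 idx.1.2).re else (G ω idx.1.1 idx.1.2).im)
      volume = gaussianReal 0 (1 / 2)

/-- `v` is a standard complex Gaussian vector: the real and imaginary parts of all entries are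
mutually independent real Gaussians of mean `0` and variance `1/2`. -/
def IsStdCplxGaussianVec {Ω : Type*} [MeasureSpace Ω] {p : ℕ} (v : Ω → Fin p → ℂ) : Prop :=
  Measurable v ∧
  iIndepFun
    (fun idx : Fin p × Bool => fun ω =>
      if idx.2 then (v ω idx.1).re else (v ω idx.1).im) volume ∧
  ∀ idx : Fin p × Bool,
    Measure.map (fun ω => if idx.2 then (v ω idx.1).re else (v ω idx.1).im)
      volume = gaussianReal 0 (1 / 2)

/-- `U` is a Haar distributed random unitary matrix: it takes values in the unitary group and
its distribution is invariant under left multiplication by any fixed unitary matrix (this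
characterizes the normalized Haar measure on the compact group `U(m)`). -/
def IsHaarUnitary {Ω : Type*} [MeasureSpace Ω] {m : ℕ} (U : Ω → Fin m → Fin m → ℂ) : Prop :=
  Measurable U ∧ (∀ ω, Matrix.of (U ω) ∈ Matrix.unitaryGroup (Fin m) ℂ) ∧
  ∀ V ∈ Matrix.unitaryGroup (Fin m) ℂ,
    Measure.map (fun ω => Matrix.of.symm (V * Matrix.of (U ω))) volume = Measure.map U volume

/-- The `(n+1) × (n+1)` Hermitian matrix `[[X, v], [v*, c]]` obtained from `X` by appending the
column `v`, the row `v*` and the real corner entry `c`. -/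
def extMatrix {n : ℕ} (X : Matrix (Fin n) (Fin n) ℂ) (v : Fin n → ℂ) (c : ℝ) :
    Matrix (Fin (n + 1)) (Fin (n + 1)) ℂ :=
  Matrix.of (Fin.snoc (fun i => Fin.snoc (X i) (v i))
    (Fin.snoc (fun j => (starRingEnd ℂ) (v j)) (c : ℂ)))

/-- Andreief identity:
`∫ det[φₖ(x_j)] det[ψₖ(x_j)] dμ(x₁)⋯dμ(xₙ) = n! det[∫ φⱼ ψₖ dμ]`. -/
theorem andreief_identity {𝒳 : Type*} [MeasurableSpace 𝒳] (μ : Measure 𝒳) [SigmaFinite μ]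
    (n : ℕ) (φ ψ : Fin n → 𝒳 → ℝ)
    (hφ : ∀ j, Measurable (φ j)) (hψ : ∀ k, Measurable (ψ k))
    (hint : ∀ j k, Integrable (fun s => φ j s * ψ k s) μ) :
    ∫ t : Fin n → 𝒳,
        (Matrix.of fun j k => φ k (t j)).det * (Matrix.of fun j k => ψ k (t j)).det
        ∂(Measure.pi fun _ => μ)
      = (n.factorial : ℝ) * (Matrix.of fun j k => ∫ s, φ j s * ψ k s ∂μ).det := by
  classical
  letI : MeasureSpace 𝒳 := ⟨μ⟩
  have hvol : (Measure.pi fun _ : Fin n => μ) = (volume : Measure (Fin n → 𝒳)) := rfl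
  rw [hvol]
  set M : Matrix (Fin n) (Fin n) ℝ := Matrix.of fun j k => ∫ s, φ j s * ψ k s ∂μ with hMdef
  have hprodint : ∀ p : Equiv.Perm (Fin n) × Equiv.Perm (Fin n),
      Integrable (fun t : Fin n → 𝒳 => ∏ j, (φ (p.1 j) (t j) * ψ (p.2 j) (t j)))
        (volume : Measure (Fin n → 𝒳)) :=
    fun p => Integrable.fintype_prod_dep (fun j => hint (p.1 j) (p.2 j))
  have key : ∀ t : Fin n → 𝒳,
      (Matrix.of fun j k => φ k (t j)).det * (Matrix.of fun j k => ψ k (t j)).det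
      = ∑ p : Equiv.Perm (Fin n) × Equiv.Perm (Fin n),
          (((Equiv.Perm.sign p.1 : ℤ) : ℝ) * ((Equiv.Perm.sign p.2 : ℤ) : ℝ)) *
            ∏ j, (φ (p.1 j) (t j) * ψ (p.2 j) (t j)) := by
    intro t
    rw [← Matrix.det_transpose (Matrix.of fun j k => φ k (t j)),
      ← Matrix.det_transpose (Matrix.of fun j k => ψ k (t j)),
      Matrix.det_apply', Matrix.det_apply', Finset.sum_mul_sum, Fintype.sum_prod_type]
    refine Finset.sum_congr rfl fun σ _ => Finset.sum_congr rfl fun τ _ => ?_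
    rw [Finset.prod_mul_distrib]
    simp only [Matrix.transpose_apply, Matrix.of_apply]
    ring
  rw [integral_congr_ae (MeasureTheory.ae_of_all _ key),
    integral_finset_sum _ (fun p _ => (hprodint p).const_mul _)]
  have hterm : ∀ p : Equiv.Perm (Fin n) × Equiv.Perm (Fin n),
      (∫ t : Fin n → 𝒳, (((Equiv.Perm.sign p.1 : ℤ) : ℝ) * ((Equiv.Perm.sign p.2 : ℤ) : ℝ)) *
          ∏ j, (φ (p.1 j) (t j) * ψ (p.2 j) (t j)))
      = (((Equiv.Perm.sign p.1 : ℤ) : ℝ) * ((Equiv.Perm.sign p.2 : ℤ) : ℝ)) *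
          ∏ j, M (p.1 j) (p.2 j) := by
    intro p
    rw [integral_const_mul, ← hvol,
      integral_fintype_prod_eq_prod (ι := Fin n) (fun j s => φ (p.1 j) s * ψ (p.2 j) s)]
    rfl
  simp only [hterm]
  rw [Fintype.sum_prod_type]
  have inner : ∀ σ : Equiv.Perm (Fin n),
      ∑ τ : Equiv.Perm (Fin n),
        (((Equiv.Perm.sign σ : ℤ) : ℝ) * ((Equiv.Perm.sign τ : ℤ) : ℝ)) *
          ∏ j, M (σ j) (τ j) = M.det := by
    intro σ
    rw [← Matrix.det_transpose M, Matrix.det_apply']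
    refine (Fintype.sum_equiv (Equiv.mulRight σ) _ _ (fun ρ => ?_)).symm
    have hs : Equiv.Perm.sign σ * Equiv.Perm.sign (ρ * σ) = Equiv.Perm.sign ρ := by
      rw [Equiv.Perm.sign_mul, mul_comm (Equiv.Perm.sign ρ), ← mul_assoc,
        Int.units_mul_self, one_mul]
    have hs' : ((Equiv.Perm.sign σ : ℤ) : ℝ) * ((Equiv.Perm.sign (ρ * σ) : ℤ) : ℝ)
        = ((Equiv.Perm.sign ρ : ℤ) : ℝ) := by
      rw [← hs]; push_cast; ring
    have hp : ∏ j, M.transpose (ρ j) j = ∏ j, M (σ j) ((ρ * σ) j) := by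
      simp only [Matrix.transpose_apply, Equiv.Perm.mul_apply]
      exact (Equiv.prod_comp σ (fun i => M i (ρ i))).symm
    simp only [Equiv.coe_mulRight]
    rw [hp, ← hs']
  simp only [inner]
  rw [Finset.sum_const, Finset.card_univ, Fintype.card_perm, Fintype.card_fin, nsmul_eq_mul]
end
end

section
/- Let p ≥ 1 and let a₁ < a₂ < ⋯ < a_{p+1} be real numbers. Then ∫_{a₁}^{a₂} db₁ ⋯ ∫_{a_p}^{a_{p+1}} db_p · Δ_p(b)/Δ_{p+1}(a) = 1/p!, where the integral is over b = (b₁, …, b_p) with a_j ≤ b_j ≤ a_{j+1} for each j; in particular the value does not depend on a₁, …, a_{p+1}. -/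
open MeasureTheory ProbabilityTheory Matrix
open scoped ComplexOrder

noncomputable section

lemma vdm_eq_det {n : ℕ} (x : Fin n → ℝ) : vdm x = (Matrix.vandermonde x).det := by
  rw [Matrix.det_vandermonde, vdm, Finset.prod_filter, Fintype.prod_prod_type]
  refine Finset.prod_congr rfl fun i _ => ?_
  rw [← Finset.prod_filter]
  refine Finset.prod_congr ?_ (fun _ _ => rfl)
  ext j; simp

lemma vdm_pos {n : ℕ} {x : Fin n → ℝ} (hx : StrictMono x) : 0 < vdm x := by
  refine Finset.prod_pos fun q hq => ?_
  simp only [Finset.mem_filter] at hq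
  exact sub_pos.mpr (hx hq.2)

lemma det_diff_eq {p : ℕ} (a : Fin (p + 1) → ℝ) :
    (Matrix.of fun (j k : Fin p) =>
        a j.succ ^ ((k : ℕ) + 1) - a j.castSucc ^ ((k : ℕ) + 1)).det
      = (Matrix.vandermonde a).det := by
  set V := Matrix.vandermonde a
  set B : Matrix (Fin (p + 1)) (Fin (p + 1)) ℝ :=
    Matrix.of (Fin.cases (V 0) (fun i => V i.succ - V i.castSucc)) with hB
  have h1 : V.det = B.det := by
    refine Matrix.det_eq_of_forall_row_eq_smul_add_pred (c := fun _ => 1) (fun j => rfl) ?_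
    intro i j
    simp [hB, V, Matrix.vandermonde]
  have h2 : B.det = (B.submatrix Fin.succ Fin.succ).det := by
    rw [Matrix.det_succ_column_zero, Fin.sum_univ_succ]
    have hB0 : B 0 0 = 1 := by simp [hB, V, Matrix.vandermonde]
    have hBs : ∀ i : Fin p, B i.succ 0 = 0 := by
      intro i; simp [hB, V, Matrix.vandermonde]
    simp [hB0, hBs, Fin.succAbove_zero]
  rw [h1, h2]
  congr 1

lemma box_integral_prod {p : ℕ} (s : Fin p → Set ℝ) (hs : ∀ j, MeasurableSet (s j))
    (g : Fin p → ℝ → ℝ) :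
    ∫ b in Set.pi Set.univ s, ∏ j, g j (b j) = ∏ j, ∫ t in s j, g j t := by
  rw [← integral_indicator (MeasurableSet.univ_pi hs)]
  have h : Set.indicator (Set.pi Set.univ s) (fun b => ∏ j, g j (b j))
      = fun b => ∏ j, Set.indicator (s j) (g j) (b j) := by
    funext b
    by_cases hb : b ∈ Set.pi Set.univ s
    · rw [Set.indicator_of_mem hb]
      exact Finset.prod_congr rfl fun j _ =>
        (Set.indicator_of_mem (hb j (Set.mem_univ j)) _).symm
    · rw [Set.indicator_of_notMem hb]
      obtain ⟨j, hj⟩ : ∃ j, b j ∉ s j := by simpa [Set.mem_pi] using hb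
      exact (Finset.prod_eq_zero (Finset.mem_univ j)
        (Set.indicator_of_notMem hj _)).symm
  rw [h, MeasureTheory.integral_fintype_prod_volume_eq_prod (ι := Fin p)
    (fun j t => Set.indicator (s j) (g j) t)]
  exact Finset.prod_congr rfl fun j _ => integral_indicator (hs j)

/-- for `a₁ < a₂ < ⋯ < a_{p+1}`, the integral of `Δ_p(b)/Δ_{p+1}(a)` over the
box `{b : a_j ≤ b_j ≤ a_{j+1}}` equals `1/p!`; in particular it does not depend on `a`. -/
theorem vandermonde_box_integral (p : ℕ) (hp : 1 ≤ p) (a : Fin (p + 1) → ℝ)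
    (ha : StrictMono a) :
    ∫ b in {b : Fin p → ℝ | ∀ j : Fin p, a j.castSucc ≤ b j ∧ b j ≤ a j.succ},
        vdm b / vdm a = 1 / (p.factorial : ℝ) := by
  classical
  set s : Fin p → Set ℝ := fun j => Set.Icc (a j.castSucc) (a j.succ) with hs_def
  have hset : {b : Fin p → ℝ | ∀ j : Fin p, a j.castSucc ≤ b j ∧ b j ≤ a j.succ}
      = Set.pi Set.univ s := by
    ext b
    simp only [Set.mem_setOf_eq, Set.mem_pi, Set.mem_univ, forall_true_left, hs_def,
      Set.mem_Icc]
  have hsm : ∀ j, MeasurableSet (s j) := fun j => measurableSet_Icc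
  have hle : ∀ j : Fin p, a j.castSucc ≤ a j.succ :=
    fun j => (ha (Fin.castSucc_lt_succ (i := j))).le
  set N : Matrix (Fin p) (Fin p) ℝ :=
    Matrix.of (fun k j => ∫ t in s j, t ^ (k : ℕ)) with hN_def
  -- expansion of vdm
  have hvdm : ∀ b : Fin p → ℝ, vdm b
      = ∑ σ : Equiv.Perm (Fin p),
          ((Equiv.Perm.sign σ : ℤ) : ℝ) * ∏ j, b j ^ ((σ⁻¹ j : Fin p) : ℕ) := by
    intro b
    rw [vdm_eq_det, Matrix.det_apply']
    refine Finset.sum_congr rfl fun σ _ => ?_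
    congr 1
    calc ∏ i, Matrix.vandermonde b (σ i) i
        = ∏ i, b (σ i) ^ ((σ⁻¹ (σ i) : Fin p) : ℕ) := by
          simp [Matrix.vandermonde]
      _ = ∏ j, b j ^ ((σ⁻¹ j : Fin p) : ℕ) :=
          Equiv.prod_comp σ (fun j => b j ^ ((σ⁻¹ j : Fin p) : ℕ))
  -- compute the integral of vdm
  have hcpt : IsCompact (Set.pi Set.univ s) :=
    isCompact_univ_pi fun j => isCompact_Icc
  have hint : ∫ b in Set.pi Set.univ s, vdm b = N.det := by
    calc ∫ b in Set.pi Set.univ s, vdm b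
        = ∫ b in Set.pi Set.univ s, ∑ σ : Equiv.Perm (Fin p),
            ((Equiv.Perm.sign σ : ℤ) : ℝ) * ∏ j, b j ^ ((σ⁻¹ j : Fin p) : ℕ) := by
          simp_rw [hvdm]
      _ = ∑ σ : Equiv.Perm (Fin p), ∫ b in Set.pi Set.univ s,
            ((Equiv.Perm.sign σ : ℤ) : ℝ) * ∏ j, b j ^ ((σ⁻¹ j : Fin p) : ℕ) := by
          refine integral_finset_sum _ fun σ _ => ?_
          refine ContinuousOn.integrableOn_compact hcpt ?_
          exact (continuous_const.mul (continuous_finset_prod _ fun j _ =>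
            (continuous_apply j).pow _)).continuousOn
      _ = ∑ σ : Equiv.Perm (Fin p),
            ((Equiv.Perm.sign σ : ℤ) : ℝ) * ∏ j, N (σ⁻¹ j) j := by
          refine Finset.sum_congr rfl fun σ _ => ?_
          rw [MeasureTheory.integral_const_mul, box_integral_prod s hsm
            (fun j t => t ^ ((σ⁻¹ j : Fin p) : ℕ))]
          rfl
      _ = ∑ σ : Equiv.Perm (Fin p),
            ((Equiv.Perm.sign σ⁻¹ : ℤ) : ℝ) * ∏ j, N (σ⁻¹ j) j := by
          refine Finset.sum_congr rfl fun σ _ => ?_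
          rw [Equiv.Perm.sign_inv]
      _ = ∑ σ : Equiv.Perm (Fin p),
            ((Equiv.Perm.sign σ : ℤ) : ℝ) * ∏ j, N (σ j) j :=
          Equiv.sum_comp (Equiv.inv (Equiv.Perm (Fin p)))
            (fun σ => ((Equiv.Perm.sign σ : ℤ) : ℝ) * ∏ j, N (σ j) j)
      _ = N.det := (Matrix.det_apply' N).symm
  -- compute N explicitly
  set D : Matrix (Fin p) (Fin p) ℝ :=
    Matrix.of (fun j k => a j.succ ^ ((k : ℕ) + 1) - a j.castSucc ^ ((k : ℕ) + 1)) with hD_def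
  have hNdet : N.det = D.det / (p.factorial : ℝ) := by
    have hfac : Matrix.diagonal (fun k : Fin p => (((k : ℕ) : ℝ) + 1)⁻¹) * Dᵀ = N := by
      ext k j
      rw [Matrix.diagonal_mul, Matrix.transpose_apply, hD_def, hN_def]
      simp only [Matrix.of_apply]
      rw [hs_def, MeasureTheory.integral_Icc_eq_integral_Ioc,
        ← intervalIntegral.integral_of_le (hle j), integral_pow]
      ring
    rw [← hfac, Matrix.det_mul, Matrix.det_transpose, Matrix.det_diagonal]
    have hprod : (∏ k : Fin p, (((k : ℕ) : ℝ) + 1)⁻¹) = ((p.factorial : ℝ))⁻¹ := by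
      rw [Finset.prod_inv_distrib]
      congr 1
      have : (∏ k : Fin p, (((k : ℕ) : ℝ) + 1))
          = ((∏ k ∈ Finset.range p, (k + 1) : ℕ) : ℝ) := by
        push_cast
        rw [Fin.prod_univ_eq_prod_range (fun i => ((i : ℝ) + 1)) p]
      rw [this, Finset.prod_range_add_one_eq_factorial]
    rw [hprod]
    ring
  have hD : D.det = vdm a := by rw [hD_def, det_diff_eq, ← vdm_eq_det]
  have hane : vdm a ≠ 0 := (vdm_pos ha).ne'
  rw [hset, integral_div, hint, hNdet, hD]
  field_simp
end
end
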